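/- Let A ⊆ [n] and B ⊆ [n] be sets of integers where every element of A is divisible by a positive integer Δ. For intervals represented by left endpoints: if A' and B' consist of the left endpoints of disjoint length-L intervals of A and length-ℓ intervals of B, respectively, with ℓ | L, ℓ dividing each left endpoint, then COUNT[z] := |{(a,b) ∈ A×B : a+b=z}| satisfies COUNT[z] = Σ_{i=0}^{L+ℓ-2} w(i)·COUNT'[z-i], where COUNT'[z'] = |{(a',b') ∈ A'×B' : a'+b'=z'}| and w(i) = |{(i₁,i₂) ∈ [L]×[ℓ] : i₁+i₂=i}|. -/

import Mathlib

open scoped Classical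

/-- Counts of pairwise sums of interval unions decompose via endpoint counts:
`COUNT[z] = Σ_{i=0}^{L+ℓ-2} w(i)·COUNT'[z-i]`. -/
theorem count_interval_decomposition (n L ℓ Δ : ℕ)
    (hL : 0 < L) (hℓ : 0 < ℓ) (hΔ : 0 < Δ) (hdvd : ℓ ∣ L)
    (A' B' : Finset ℤ)
    (hA'div : ∀ a' ∈ A', (ℓ : ℤ) ∣ a') (hB'div : ∀ b' ∈ B', (ℓ : ℤ) ∣ b')
    (hA'disj : (A' : Set ℤ).PairwiseDisjoint
      fun a' => Finset.Ico a' (a' + (L : ℤ)))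
    (hB'disj : (B' : Set ℤ).PairwiseDisjoint
      fun b' => Finset.Ico b' (b' + (ℓ : ℤ)))
    (A B : Finset ℤ)
    (hA : A = A'.biUnion fun a' => Finset.Ico a' (a' + (L : ℤ)))
    (hB : B = B'.biUnion fun b' => Finset.Ico b' (b' + (ℓ : ℤ)))
    (hAn : ∀ a ∈ A, 0 ≤ a ∧ a < (n : ℤ))
    (hBn : ∀ b ∈ B, 0 ≤ b ∧ b < (n : ℤ))
    (hAΔ : ∀ a ∈ A, (Δ : ℤ) ∣ a) :
    ∀ z : ℤ,
      ((A ×ˢ B).filter fun p => p.1 + p.2 = z).card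
        = ∑ i ∈ Finset.range (L + ℓ - 1),
            ((Finset.range L ×ˢ Finset.range ℓ).filter
                fun q => q.1 + q.2 = i).card *
              ((A' ×ˢ B').filter fun p => p.1 + p.2 = z - (i : ℤ)).card := by
  intro z
  classical
  have keyA : ∀ a' ∈ A', ∀ a'' ∈ A', ∀ v : ℤ,
      v ∈ Finset.Ico a' (a' + (L : ℤ)) → v ∈ Finset.Ico a'' (a'' + (L : ℤ)) → a' = a'' := by
    intro a' h1 a'' h2 v hv1 hv2
    by_contra hne
    exact (Finset.disjoint_left.1 (hA'disj h1 h2 hne) hv1) hv2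
  have keyB : ∀ b' ∈ B', ∀ b'' ∈ B', ∀ v : ℤ,
      v ∈ Finset.Ico b' (b' + (ℓ : ℤ)) → v ∈ Finset.Ico b'' (b'' + (ℓ : ℤ)) → b' = b'' := by
    intro b' h1 b'' h2 v hv1 hv2
    by_contra hne
    exact (Finset.disjoint_left.1 (hB'disj h1 h2 hne) hv1) hv2
  set S : Finset ((ℕ × ℕ) × (ℤ × ℤ)) :=
    ((Finset.range L ×ˢ Finset.range ℓ) ×ˢ (A' ×ˢ B')).filter
      (fun q => q.2.1 + q.2.2 = z - ((q.1.1 : ℤ) + (q.1.2 : ℤ))) with hS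
  have h1 : ((A ×ˢ B).filter fun p => p.1 + p.2 = z).card = S.card := by
    refine (Finset.card_bij (fun q _ => (q.2.1 + (q.1.1 : ℤ), q.2.2 + (q.1.2 : ℤ))) ?_ ?_ ?_).symm
    · rintro ⟨⟨i1, i2⟩, ⟨a', b'⟩⟩ hq
      simp only [hS, Finset.mem_filter, Finset.mem_product, Finset.mem_range] at hq
      obtain ⟨⟨⟨hi1, hi2⟩, ha', hb'⟩, hsum⟩ := hq
      simp only [Finset.mem_filter, Finset.mem_product]
      refine ⟨⟨?_, ?_⟩, by push_cast; omega⟩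
      · rw [hA]
        exact Finset.mem_biUnion.2 ⟨a', ha', Finset.mem_Ico.2 ⟨by omega, by omega⟩⟩
      · rw [hB]
        exact Finset.mem_biUnion.2 ⟨b', hb', Finset.mem_Ico.2 ⟨by omega, by omega⟩⟩
    · rintro ⟨⟨i1, i2⟩, ⟨a', b'⟩⟩ hq ⟨⟨j1, j2⟩, ⟨c', d'⟩⟩ hq' heq
      simp only [hS, Finset.mem_filter, Finset.mem_product, Finset.mem_range] at hq hq'
      obtain ⟨⟨⟨hi1, hi2⟩, ha', hb'⟩, hsum⟩ := hq
      obtain ⟨⟨⟨hj1, hj2⟩, hc', hd'⟩, hsum'⟩ := hq'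
      have e1 : a' + (i1 : ℤ) = c' + (j1 : ℤ) := congrArg Prod.fst heq
      have e2 : b' + (i2 : ℤ) = d' + (j2 : ℤ) := congrArg Prod.snd heq
      have hac : a' = c' := keyA a' ha' c' hc' (a' + (i1 : ℤ))
        (Finset.mem_Ico.2 ⟨by omega, by omega⟩)
        (by rw [e1]; exact Finset.mem_Ico.2 ⟨by omega, by omega⟩)
      have hbd : b' = d' := keyB b' hb' d' hd' (b' + (i2 : ℤ))
        (Finset.mem_Ico.2 ⟨by omega, by omega⟩)
        (by rw [e2]; exact Finset.mem_Ico.2 ⟨by omega, by omega⟩)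
      have hij1 : i1 = j1 := by omega
      have hij2 : i2 = j2 := by omega
      subst hac; subst hbd; subst hij1; subst hij2; rfl
    · rintro ⟨a, b⟩ hp
      simp only [Finset.mem_filter, Finset.mem_product] at hp
      obtain ⟨⟨haA, hbB⟩, habz⟩ := hp
      rw [hA] at haA
      rw [hB] at hbB
      obtain ⟨a', ha', haI⟩ := Finset.mem_biUnion.1 haA
      obtain ⟨b', hb', hbI⟩ := Finset.mem_biUnion.1 hbB
      rw [Finset.mem_Ico] at haI hbI
      refine ⟨⟨⟨(a - a').toNat, (b - b').toNat⟩, ⟨a', b'⟩⟩, ?_, ?_⟩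
      · simp only [hS, Finset.mem_filter, Finset.mem_product, Finset.mem_range]
        refine ⟨⟨⟨?_, ?_⟩, ha', hb'⟩, ?_⟩ <;> omega
      · simp only []
        have : ((a - a').toNat : ℤ) = a - a' := by omega
        have : ((b - b').toNat : ℤ) = b - b' := by omega
        simp only [Prod.mk.injEq]
        constructor <;> omega
  rw [h1]
  have hSb : S = (Finset.range (L + ℓ - 1)).biUnion (fun i =>
      ((Finset.range L ×ˢ Finset.range ℓ).filter fun q => q.1 + q.2 = i) ×ˢ
        ((A' ×ˢ B').filter fun p => p.1 + p.2 = z - (i : ℤ))) := by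
    ext ⟨⟨i1, i2⟩, ⟨a', b'⟩⟩
    simp only [hS, Finset.mem_filter, Finset.mem_product, Finset.mem_range, Finset.mem_biUnion]
    constructor
    · rintro ⟨⟨⟨hi1, hi2⟩, ha', hb'⟩, hsum⟩
      exact ⟨i1 + i2, by omega, ⟨⟨⟨hi1, hi2⟩, rfl⟩, ⟨⟨ha', hb'⟩, by push_cast; omega⟩⟩⟩
    · rintro ⟨i, hi, ⟨⟨⟨hi1, hi2⟩, hieq⟩, ⟨⟨ha', hb'⟩, hsum⟩⟩⟩
      subst hieq
      exact ⟨⟨⟨hi1, hi2⟩, ha', hb'⟩, by push_cast at hsum ⊢; omega⟩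
  rw [hSb, Finset.card_biUnion]
  · simp [Finset.card_product]
  · intro i hi j hj hij
    rw [Function.onFun, Finset.disjoint_left]
    rintro ⟨⟨i1, i2⟩, p⟩ hqi hqj
    simp only [Finset.mem_filter, Finset.mem_product] at hqi hqj
    omega
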